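/- arXiv:0910.4789 — 2 statements merged into one kernel-verified Lean document; each statement's English description precedes it below -/
import Mathlib

section
/- Suppose x, y, z are vertices of the finite simplicial graph Γ such that x is not adjacent to y, lk(x) separates y from z (i.e. y and z lie in different connected components of the induced subgraph on the complement of lk(x)), and lk(y) separates x from z. Then lk(x) ∩ lk(y) separates both x and y from z (i.e. the connected component of z in the induced subgraph on the complement of lk(x) ∩ lk(y) contains neither x nor y); in particular, Γ contains a separating intersection of links. -/
open SimpleGraph

variable {V : Type*}

/-- The link of a vertex: the set of adjacent vertices. -/
def lk (G : SimpleGraph V) (x : V) : Set V := {z | G.Adj x z}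

/-- The star of a vertex: the link together with the vertex itself. -/
def st (G : SimpleGraph V) (x : V) : Set V := insert x (lk G x)

/-- `Dominates G y x` means `y ≥ x`, i.e. `lk x ⊆ st y`. -/
def Dominates (G : SimpleGraph V) (y x : V) : Prop := lk G x ⊆ st G y

/-- `Γ` contains a domination-equivalent pair of (distinct) vertices. -/
def DomEquivPair (G : SimpleGraph V) : Prop :=
  ∃ x y : V, x ≠ y ∧ Dominates G x y ∧ Dominates G y x

/-- `S` separates `u` from `v`: both lie outside `S` and they are not joined by a path
in the induced subgraph on the complement of `S`. -/
def SeparatesFrom (G : SimpleGraph V) (S : Set V) (u v : V) : Prop :=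
  ∃ (hu : u ∈ Sᶜ) (hv : v ∈ Sᶜ),
    ¬ (G.induce Sᶜ).Reachable ⟨u, hu⟩ ⟨v, hv⟩

/-- `Γ` has a separating intersection of links: there are distinct non-adjacent vertices
`x, y` and a vertex `z` whose connected component in the induced subgraph on the
complement of `lk x ∩ lk y` contains neither `x` nor `y`. -/
def SepIntLinks (G : SimpleGraph V) : Prop :=
  ∃ x y : V, x ≠ y ∧ ¬ G.Adj x y ∧ ∃ z : V,
    SeparatesFrom G (lk G x ∩ lk G y) z x ∧ SeparatesFrom G (lk G x ∩ lk G y) z y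

/-- `Y` is the vertex set of a connected component of the induced subgraph on `S`. -/
def IsCompOf (G : SimpleGraph V) (S : Set V) (Y : Set V) : Prop :=
  Y.Nonempty ∧ Y ⊆ S ∧
    ∀ a : S, a.1 ∈ Y → ∀ b : S, ((G.induce S).Reachable a b ↔ b.1 ∈ Y)

open scoped commutatorElement in
/-- The defining relators of the right-angled Artin group of `G`. -/
def raagRels (G : SimpleGraph V) : Set (FreeGroup V) :=
  {r | ∃ x y : V, G.Adj x y ∧ r = ⁅FreeGroup.of x, FreeGroup.of y⁆}

/-- The right-angled Artin group of a graph. -/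
abbrev RAAG (G : SimpleGraph V) : Type _ := PresentedGroup (raagRels G)

/-- The generator of the RAAG corresponding to a vertex. -/
def gen (G : SimpleGraph V) (x : V) : RAAG G := PresentedGroup.of x

/-- The subgroup of inner automorphisms. -/
def Inn (H : Type*) [Group H] : Subgroup (MulAut H) := (MulAut.conj : H →* MulAut H).range

instance Inn.normal (H : Type*) [Group H] : (Inn H).Normal := by
  constructor
  intro n hn g
  obtain ⟨h, rfl⟩ := hn
  refine ⟨g h, ?_⟩
  ext x
  simp [MulAut.conj]

/-- The outer automorphism group `Out(A_Γ)` of the RAAG of `G`. -/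
abbrev OutG (G : SimpleGraph V) := MulAut (RAAG G) ⧸ Inn (RAAG G)

/-- A group contains a subgroup isomorphic to the free group of rank 2. -/
def HasFreeRankTwo (H : Type*) [Group H] : Prop :=
  ∃ K : Subgroup H, Nonempty (↥K ≃* FreeGroup (Fin 2))

/-- A group is virtually nilpotent. -/
def VirtNilpotent (H : Type*) [Group H] : Prop :=
  ∃ K : Subgroup H, K.FiniteIndex ∧ Group.IsNilpotent ↥K

/-- `φ` is a transvection with multiplier `x^ε` acting on the generator `y`
(either a right or a left transvection). -/
def IsTransvection (G : SimpleGraph V) (φ : MulAut (RAAG G)) (x y : V) (ε : ℤ) : Prop :=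
  x ≠ y ∧ Dominates G x y ∧ (ε = 1 ∨ ε = -1) ∧
  (φ (gen G y) = gen G y * (gen G x) ^ ε ∨ φ (gen G y) = (gen G x) ^ ε * gen G y) ∧
  ∀ z : V, z ≠ y → φ (gen G z) = gen G z

/-- `φ` is a non-inner partial conjugation with multiplier `x^ε`, conjugating exactly the
generators in the connected component `Y` of the complement of `st x`. -/
def IsPartialConj (G : SimpleGraph V) (φ : MulAut (RAAG G)) (x : V) (ε : ℤ) (Y : Set V) : Prop :=
  (ε = 1 ∨ ε = -1) ∧ IsCompOf G ((st G x)ᶜ) Y ∧ ((st G x ∪ Y)ᶜ).Nonempty ∧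
  (∀ y ∈ Y, φ (gen G y) = (gen G x) ^ (-ε) * gen G y * (gen G x) ^ ε) ∧
  ∀ z : V, z ∉ Y → φ (gen G z) = gen G z

/-- A domination chain, listed with the dominant member first. -/
def IsDomChain (G : SimpleGraph V) (l : List V) : Prop :=
  l ≠ [] ∧ l.Nodup ∧ l.Chain' (fun a b => Dominates G a b)

/-- The domination depth of a vertex: the maximal length of a domination chain with
top member `x`. -/
noncomputable def domDepth (G : SimpleGraph V) (x : V) : ℕ :=
  sSup {n | ∃ l : List V, IsDomChain G l ∧ l.head? = some x ∧ l.length = n + 1}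

/-- A star-separation preserving domination chain with top member `xm` and
bottom member `x1`. -/
def IsSSPChain (G : SimpleGraph V) (l : List V) (xm x1 : V) : Prop :=
  IsDomChain G l ∧ l.head? = some xm ∧ l.getLast? = some x1 ∧
  ∃ Y1 Y2 : Set V, IsCompOf G ((st G x1)ᶜ) Y1 ∧ IsCompOf G ((st G x1)ᶜ) Y2 ∧
    Y1 ≠ Y2 ∧ ¬ Y1 ⊆ st G xm ∧ ¬ Y2 ⊆ st G xm

/-- The star-separation depth of a vertex: `1 +` the maximal length of a star-separation
preserving chain with top member `x` (this is `0` if there is no such chain, as then the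
set below is empty). -/
noncomputable def ssDepth (G : SimpleGraph V) (x : V) : ℕ :=
  sSup {n | ∃ (l : List V) (x1 : V), IsSSPChain G l x x1 ∧ l.length = n}

/-- The depth of a vertex. -/
noncomputable def vdepth (G : SimpleGraph V) (x : V) : ℕ := max (domDepth G x) (ssDepth G x)

/-- The depth of the graph `G`. -/
noncomputable def gdepth (G : SimpleGraph V) : ℕ := sSup {n | ∃ x : V, n = vdepth G x}

/-- The set of images in `Out(A_Γ)` of all transvections and all non-inner partial
conjugations. -/
def TvPcSet (G : SimpleGraph V) : Set (OutG G) :=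
  {g | ∃ φ : MulAut (RAAG G), (QuotientGroup.mk φ : OutG G) = g ∧
    ((∃ x y ε, IsTransvection G φ x y ε) ∨ (∃ x ε Y, IsPartialConj G φ x ε Y))}

/-- The subgroup `N` of `Out(A_Γ)` generated by the images of all transvections and
all non-inner partial conjugations. -/
def Ngrp (G : SimpleGraph V) : Subgroup (OutG G) := Subgroup.closure (TvPcSet G)

/-- If `x` is not adjacent to `y`, `lk x` separates `y` from `z` and
`lk y` separates `x` from `z`, then `lk x ∩ lk y` separates both `x` and `y` from `z`;
in particular `Γ` contains a separating intersection of links. -/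
theorem sepIntLinks_of_links_separate [Fintype V] (G : SimpleGraph V) (x y z : V)
    (hxy : x ≠ y) (hadj : ¬ G.Adj x y)
    (h1 : SeparatesFrom G (lk G x) y z) (h2 : SeparatesFrom G (lk G y) x z) :
    (SeparatesFrom G (lk G x ∩ lk G y) z x ∧ SeparatesFrom G (lk G x ∩ lk G y) z y) ∧
      SepIntLinks G := by
  obtain ⟨hy1, hz1, hr1⟩ := h1
  obtain ⟨hx2, hz2, hr2⟩ := h2
  have hmemx : ∀ v : V, v ∈ (lk G x)ᶜ ↔ ¬ G.Adj x v := fun v => Iff.rfl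
  have hmemy : ∀ v : V, v ∈ (lk G y)ᶜ ↔ ¬ G.Adj y v := fun v => Iff.rfl
  set S := lk G x ∩ lk G y with hS
  have hzS : z ∈ Sᶜ := fun h => hz1 h.1
  have hxS : x ∈ Sᶜ := fun h => G.irrefl h.1
  have hyS : y ∈ Sᶜ := fun h => G.irrefl h.2
  let good : V → Prop := fun v =>
    ∃ (hvx : v ∈ (lk G x)ᶜ) (hvy : v ∈ (lk G y)ᶜ),
      (G.induce (lk G x)ᶜ).Reachable ⟨z, hz1⟩ ⟨v, hvx⟩ ∧
      (G.induce (lk G y)ᶜ).Reachable ⟨z, hz2⟩ ⟨v, hvy⟩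
  have goodz : good z := ⟨hz1, hz2, Reachable.refl _, Reachable.refl _⟩
  have step : ∀ v w : V, good v → G.Adj v w → w ∈ Sᶜ → good w := by
    rintro v w ⟨hvx, hvy, rvx, rvy⟩ hvw hwS
    by_cases hwx : G.Adj x w
    · have hwy : w ∈ (lk G y)ᶜ := fun h => hwS ⟨hwx, h⟩
      exfalso
      apply hr2
      have e1 : (G.induce (lk G y)ᶜ).Adj ⟨x, hx2⟩ ⟨w, hwy⟩ := by
        simp only [SimpleGraph.comap_adj]; exact hwx
      have e2 : (G.induce (lk G y)ᶜ).Adj ⟨w, hwy⟩ ⟨v, hvy⟩ := by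
        simp only [SimpleGraph.comap_adj]; exact hvw.symm
      exact e1.reachable.trans (e2.reachable.trans rvy.symm)
    · by_cases hwy : G.Adj y w
      · exfalso
        apply hr1
        have e1 : (G.induce (lk G x)ᶜ).Adj ⟨y, hy1⟩ ⟨w, hwx⟩ := by
          simp only [SimpleGraph.comap_adj]; exact hwy
        have e2 : (G.induce (lk G x)ᶜ).Adj ⟨w, hwx⟩ ⟨v, hvx⟩ := by
          simp only [SimpleGraph.comap_adj]; exact hvw.symm
        exact e1.reachable.trans (e2.reachable.trans rvx.symm)
      · refine ⟨hwx, hwy, rvx.trans ?_, rvy.trans ?_⟩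
        · exact SimpleGraph.Adj.reachable (by
            simp only [SimpleGraph.comap_adj]
            exact hvw : (G.induce (lk G x)ᶜ).Adj ⟨v, hvx⟩ ⟨w, hwx⟩)
        · exact SimpleGraph.Adj.reachable (by
            simp only [SimpleGraph.comap_adj]
            exact hvw : (G.induce (lk G y)ᶜ).Adj ⟨v, hvy⟩ ⟨w, hwy⟩)
  have aux : ∀ (a b : ↥Sᶜ) (p : (G.induce Sᶜ).Walk a b), good b.1 → good a.1 := by
    intro a b p
    induction p with
    | nil => exact id
    | cons h q ih =>
      intro hb
      have hgc := ih hb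
      refine step _ _ hgc ?_ ?_
      · have := h.symm
        simp only [SimpleGraph.comap_adj] at this
        exact this
      · exact Subtype.prop _
  have key : ∀ (t : V) (ht : t ∈ Sᶜ),
      (G.induce Sᶜ).Reachable ⟨z, hzS⟩ ⟨t, ht⟩ → good t := by
    intro t ht hr
    obtain ⟨p⟩ := hr.symm
    exact aux _ _ p goodz
  have sep1 : SeparatesFrom G (lk G x ∩ lk G y) z x := by
    refine ⟨hzS, hxS, fun hr => ?_⟩
    obtain ⟨_, _, _, rxy⟩ := key x hxS hr
    exact hr2 rxy.symm
  have sep2 : SeparatesFrom G (lk G x ∩ lk G y) z y := by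
    refine ⟨hzS, hyS, fun hr => ?_⟩
    obtain ⟨_, _, ryx, _⟩ := key y hyS hr
    exact hr1 ryx.symm
  exact ⟨⟨sep1, sep2⟩, x, y, hxy, hadj, z, sep1, sep2⟩
end

section
/- For k ≥ 1, let Γ_k be the finite simplicial graph with 2k+2 vertices x_0, …, x_k, y_0, …, y_k, where the vertices x_0, …, x_k span a complete graph, the vertices y_0, …, y_k span a complete graph, x_i is adjacent to y_j if and only if i + j > k, and there are no other edges. Then Γ_k contains no domination-equivalent pair of vertices, Γ_k contains no separating intersection of links, and depth(Γ_k) = k (indeed depth(x_i) = depth(y_i) = i for each i = 0, …, k). -/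
open SimpleGraph

variable {V : Type*}

/-- The graph `Γ_k`: vertices `x_0, …, x_k` (left) and `y_0, …, y_k` (right); the `x_i`
span a complete graph, the `y_j` span a complete graph, and `x_i` is adjacent to `y_j`
if and only if `i + j > k`. -/
def Gk (k : ℕ) : SimpleGraph (Fin (k + 1) ⊕ Fin (k + 1)) :=
  SimpleGraph.fromRel (fun a b =>
    match a, b with
    | Sum.inl _, Sum.inl _ => True
    | Sum.inr _, Sum.inr _ => True
    | Sum.inl i, Sum.inr j => (i : ℕ) + (j : ℕ) > k
    | Sum.inr i, Sum.inl j => (j : ℕ) + (i : ℕ) > k)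

/-! ### Auxiliary lemmas for the proof -/

lemma gk_adj_ll {k : ℕ} {i j : Fin (k+1)} : (Gk k).Adj (.inl i) (.inl j) ↔ i ≠ j := by
  simp [Gk, SimpleGraph.fromRel_adj]

lemma gk_adj_rr {k : ℕ} {i j : Fin (k+1)} : (Gk k).Adj (.inr i) (.inr j) ↔ i ≠ j := by
  simp [Gk, SimpleGraph.fromRel_adj]

lemma gk_adj_lr {k : ℕ} {i j : Fin (k+1)} : (Gk k).Adj (.inl i) (.inr j) ↔ (i:ℕ) + (j:ℕ) > k := by
  simp [Gk, SimpleGraph.fromRel_adj]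

lemma gk_adj_rl {k : ℕ} {i j : Fin (k+1)} : (Gk k).Adj (.inr i) (.inl j) ↔ (i:ℕ) + (j:ℕ) > k := by
  simp [Gk, SimpleGraph.fromRel_adj]; omega

lemma mem_lk {G : SimpleGraph V} {x z : V} : z ∈ lk G x ↔ G.Adj x z := Iff.rfl

lemma mem_st {G : SimpleGraph V} {x z : V} : z ∈ st G x ↔ z = x ∨ G.Adj x z := by
  simp [st, lk, Set.mem_insert_iff]

lemma dom_ll {k : ℕ} {i j : Fin (k+1)} :
    Dominates (Gk k) (Sum.inl j) (Sum.inl i) ↔ (i:ℕ) ≤ (j:ℕ) := by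
  constructor
  · intro h
    by_contra hij
    push_neg at hij
    have hi : (i:ℕ) ≤ k := Fin.is_le i
    have hj : (j:ℕ) ≤ k := Fin.is_le j
    have hm : k + 1 - (i:ℕ) < k + 1 := by omega
    have hz : (Sum.inr (⟨k+1-(i:ℕ), hm⟩ : Fin (k+1)) : Fin (k+1) ⊕ Fin (k+1)) ∈ lk (Gk k) (Sum.inl i) := by
      rw [mem_lk, gk_adj_lr]
      show k < (i:ℕ) + (k + 1 - (i:ℕ))
      omega
    have h2 := h hz
    rw [mem_st] at h2
    rcases h2 with h2 | h2
    · exact absurd h2 (by simp)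
    · rw [gk_adj_lr] at h2
      have h3 : k < (j:ℕ) + (k + 1 - (i:ℕ)) := h2
      omega
  · intro h z hz
    rw [mem_lk] at hz
    rw [mem_st]
    match z with
    | Sum.inl l =>
      by_cases hlj : l = j
      · exact Or.inl (by rw [hlj])
      · exact Or.inr (gk_adj_ll.mpr fun e => hlj e.symm)
    | Sum.inr m =>
      rw [gk_adj_lr] at hz
      exact Or.inr (gk_adj_lr.mpr (by omega))

lemma dom_rr {k : ℕ} {i j : Fin (k+1)} :
    Dominates (Gk k) (Sum.inr j) (Sum.inr i) ↔ (i:ℕ) ≤ (j:ℕ) := by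
  constructor
  · intro h
    by_contra hij
    push_neg at hij
    have hi : (i:ℕ) ≤ k := Fin.is_le i
    have hj : (j:ℕ) ≤ k := Fin.is_le j
    have hm : k + 1 - (i:ℕ) < k + 1 := by omega
    have hz : (Sum.inl (⟨k+1-(i:ℕ), hm⟩ : Fin (k+1)) : Fin (k+1) ⊕ Fin (k+1)) ∈ lk (Gk k) (Sum.inr i) := by
      rw [mem_lk, gk_adj_rl]
      show k < (i:ℕ) + (k + 1 - (i:ℕ))
      omega
    have h2 := h hz
    rw [mem_st] at h2
    rcases h2 with h2 | h2
    · exact absurd h2 (by simp)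
    · rw [gk_adj_rl] at h2
      have h3 : k < (j:ℕ) + (k + 1 - (i:ℕ)) := h2
      omega
  · intro h z hz
    rw [mem_lk] at hz
    rw [mem_st]
    match z with
    | Sum.inr l =>
      by_cases hlj : l = j
      · exact Or.inl (by rw [hlj])
      · exact Or.inr (gk_adj_rr.mpr fun e => hlj e.symm)
    | Sum.inl m =>
      rw [gk_adj_rl] at hz
      exact Or.inr (gk_adj_rl.mpr (by omega))

lemma dom_rl {k : ℕ} (hk : 1 ≤ k) {i j : Fin (k+1)} :
    Dominates (Gk k) (Sum.inr j) (Sum.inl i) ↔ (i:ℕ) = 0 ∧ (j:ℕ) = k := by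
  have hik : (i:ℕ) ≤ k := Fin.is_le i
  have hjk : (j:ℕ) ≤ k := Fin.is_le j
  constructor
  · intro h
    have hi0 : (i:ℕ) = 0 := by
      by_contra hi
      have hz : (Sum.inl (⟨0, by omega⟩ : Fin (k+1)) : Fin (k+1) ⊕ Fin (k+1)) ∈ lk (Gk k) (Sum.inl i) := by
        rw [mem_lk, gk_adj_ll]
        intro e
        exact hi (by rw [e])
      have h2 := h hz
      rw [mem_st] at h2
      rcases h2 with h2 | h2
      · exact absurd h2 (by simp)
      · rw [gk_adj_rl] at h2
        have h3 : k < (j:ℕ) + 0 := h2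
        omega
    refine ⟨hi0, ?_⟩
    have hz : (Sum.inl (⟨1, by omega⟩ : Fin (k+1)) : Fin (k+1) ⊕ Fin (k+1)) ∈ lk (Gk k) (Sum.inl i) := by
      rw [mem_lk, gk_adj_ll]
      intro e
      have : (i:ℕ) = 1 := by rw [e]
      omega
    have h2 := h hz
    rw [mem_st] at h2
    rcases h2 with h2 | h2
    · exact absurd h2 (by simp)
    · rw [gk_adj_rl] at h2
      have h3 : k < (j:ℕ) + 1 := h2
      omega
  · rintro ⟨hi0, hjk'⟩ z hz
    rw [mem_lk] at hz
    rw [mem_st]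
    match z with
    | Sum.inl l =>
      rw [gk_adj_ll] at hz
      refine Or.inr (gk_adj_rl.mpr ?_)
      have hl : (l:ℕ) ≠ 0 := fun e => hz (Fin.ext (by omega)).symm
      omega
    | Sum.inr m =>
      rw [gk_adj_lr] at hz
      have hmk : (m:ℕ) ≤ k := Fin.is_le m
      exact absurd hz (by omega)

lemma dom_lr {k : ℕ} (hk : 1 ≤ k) {i j : Fin (k+1)} :
    Dominates (Gk k) (Sum.inl j) (Sum.inr i) ↔ (i:ℕ) = 0 ∧ (j:ℕ) = k := by
  have hik : (i:ℕ) ≤ k := Fin.is_le i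
  have hjk : (j:ℕ) ≤ k := Fin.is_le j
  constructor
  · intro h
    have hi0 : (i:ℕ) = 0 := by
      by_contra hi
      have hz : (Sum.inr (⟨0, by omega⟩ : Fin (k+1)) : Fin (k+1) ⊕ Fin (k+1)) ∈ lk (Gk k) (Sum.inr i) := by
        rw [mem_lk, gk_adj_rr]
        intro e
        exact hi (by rw [e])
      have h2 := h hz
      rw [mem_st] at h2
      rcases h2 with h2 | h2
      · exact absurd h2 (by simp)
      · rw [gk_adj_lr] at h2
        have h3 : k < (j:ℕ) + 0 := h2
        omega
    refine ⟨hi0, ?_⟩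
    have hz : (Sum.inr (⟨1, by omega⟩ : Fin (k+1)) : Fin (k+1) ⊕ Fin (k+1)) ∈ lk (Gk k) (Sum.inr i) := by
      rw [mem_lk, gk_adj_rr]
      intro e
      have : (i:ℕ) = 1 := by rw [e]
      omega
    have h2 := h hz
    rw [mem_st] at h2
    rcases h2 with h2 | h2
    · exact absurd h2 (by simp)
    · rw [gk_adj_lr] at h2
      have h3 : k < (j:ℕ) + 1 := h2
      omega
  · rintro ⟨hi0, hjk'⟩ z hz
    rw [mem_lk] at hz
    rw [mem_st]
    match z with
    | Sum.inr l =>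
      rw [gk_adj_rr] at hz
      refine Or.inr (gk_adj_lr.mpr ?_)
      have hl : (l:ℕ) ≠ 0 := fun e => hz (Fin.ext (by omega)).symm
      omega
    | Sum.inl m =>
      rw [gk_adj_rl] at hz
      have hmk : (m:ℕ) ≤ k := Fin.is_le m
      exact absurd hz (by omega)

/-- The rank of a vertex of `Γ_k`. -/
def rnk {k : ℕ} : Fin (k+1) ⊕ Fin (k+1) → ℕ := Sum.elim Fin.val Fin.val

lemma dom_lt {k : ℕ} (hk : 1 ≤ k) {a b : Fin (k+1) ⊕ Fin (k+1)}
    (hd : Dominates (Gk k) a b) (hne : a ≠ b) : rnk b < rnk a := by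
  match a, b with
  | Sum.inl j, Sum.inl i =>
    have h := dom_ll.mp hd
    have h2 : (i:ℕ) ≠ (j:ℕ) := fun e => hne (by rw [Fin.ext e])
    simp only [rnk, Sum.elim_inl]
    omega
  | Sum.inl j, Sum.inr i =>
    obtain ⟨h1, h2⟩ := (dom_lr hk).mp hd
    simp only [rnk, Sum.elim_inl, Sum.elim_inr]
    omega
  | Sum.inr j, Sum.inl i =>
    obtain ⟨h1, h2⟩ := (dom_rl hk).mp hd
    simp only [rnk, Sum.elim_inl, Sum.elim_inr]
    omega
  | Sum.inr j, Sum.inr i =>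
    have h := dom_rr.mp hd
    have h2 : (i:ℕ) ≠ (j:ℕ) := fun e => hne (by rw [Fin.ext e])
    simp only [rnk, Sum.elim_inr]
    omega

/-- The descending list `[n, n-1, …, 0]`. -/
def desc : ℕ → List ℕ
  | 0 => [0]
  | n+1 => (n+1) :: desc n

lemma desc_length (n : ℕ) : (desc n).length = n + 1 := by
  induction n with
  | zero => rfl
  | succ n ih => simp [desc, ih]

lemma desc_head (n : ℕ) : (desc n).head? = some n := by
  cases n <;> rfl

lemma mem_desc {m n : ℕ} : m ∈ desc n ↔ m ≤ n := by
  induction n with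
  | zero => simp [desc]
  | succ n ih => simp [desc, ih]; omega

lemma desc_nodup (n : ℕ) : (desc n).Nodup := by
  induction n with
  | zero => simp [desc]
  | succ n ih =>
    refine List.Nodup.cons ?_ ih
    rw [mem_desc]; omega

lemma desc_chain (n : ℕ) : (desc n).Chain' (fun a b => b < a) := by
  induction n with
  | zero => simp [desc, List.Chain', List.isChain_singleton]
  | succ n ih =>
    unfold List.Chain' at ih ⊢
    rw [desc, List.isChain_cons]
    refine ⟨?_, ih⟩
    intro y hy
    rw [desc_head n] at hy
    simp at hy
    omega

lemma chain_len {α : Type*} (r : α → ℕ) :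
    ∀ l : List α, l.Chain' (fun a b => r b < r a) → ∀ x, l.head? = some x → l.length ≤ r x + 1
  | [] => by simp
  | [a] => by
      intro _ x hx
      simp at hx
      subst hx
      simp
  | a :: b :: t => by
      intro h x hx
      unfold List.Chain' at h
      rw [List.isChain_cons_cons] at h
      have h2 := chain_len r (b :: t) h.2 b rfl
      simp only [List.head?_cons, Option.some.injEq] at hx
      subst hx
      simp only [List.length_cons] at h2 ⊢
      have := h.1
      omega

lemma gk_chain {k : ℕ} {W : Type*} {G : SimpleGraph W} (f : Fin (k+1) → W)
    (hinj : Function.Injective f)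
    (hdom : ∀ i j : Fin (k+1), (i:ℕ) ≤ (j:ℕ) → Dominates G (f j) (f i)) (i : Fin (k+1)) :
    ∃ l, IsDomChain G l ∧ l.head? = some (f i) ∧ l.length = (i:ℕ) + 1 := by
  set g : ℕ → W := fun t => f ⟨min t k, Nat.lt_succ_of_le (min_le_right t k)⟩ with hg
  have hik : (i:ℕ) ≤ k := Fin.is_le i
  have hlen : ((desc (i:ℕ)).map g).length = (i:ℕ) + 1 := by
    rw [List.length_map, desc_length]
  refine ⟨(desc (i:ℕ)).map g, ⟨?_, ?_, ?_⟩, ?_, hlen⟩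
  · intro e
    rw [e] at hlen
    simp at hlen
  · refine List.Nodup.map_on ?_ (desc_nodup _)
    intro s hs t ht he
    rw [mem_desc] at hs ht
    have := hinj he
    have h2 : min s k = min t k := congrArg Fin.val this
    omega
  · unfold List.Chain'
    rw [List.isChain_map, List.isChain_iff_getElem]
    have hc := desc_chain (i:ℕ)
    unfold List.Chain' at hc
    rw [List.isChain_iff_getElem] at hc
    intro idx h
    have h1 := hc idx h
    have hm1 : (desc (i:ℕ)).get ⟨idx, by omega⟩ ∈ desc (i:ℕ) := List.get_mem _ _
    have hm2 : (desc (i:ℕ)).get ⟨idx + 1, by omega⟩ ∈ desc (i:ℕ) := List.get_mem _ _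
    rw [mem_desc] at hm1 hm2
    refine hdom _ _ ?_
    show min _ k ≤ min _ k
    omega
  · rw [List.head?_map, desc_head]
    simp only [Option.map_some]
    congr 1
    apply congrArg f
    apply Fin.ext
    show min (i:ℕ) k = (i:ℕ)
    omega

lemma domchain_rank {k : ℕ} (hk : 1 ≤ k) {l : List (Fin (k+1) ⊕ Fin (k+1))}
    (h : IsDomChain (Gk k) l) : l.Chain' (fun a b => rnk b < rnk a) := by
  obtain ⟨-, hnd, hc⟩ := h
  unfold List.Chain' at hc ⊢
  rw [List.isChain_iff_getElem] at hc ⊢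
  intro idx hlt
  refine dom_lt hk (hc idx hlt) ?_
  intro e
  have hinj := List.nodup_iff_injective_get.mp hnd e
  simp only [Fin.mk.injEq] at hinj
  omega

lemma gk_domDepth {k : ℕ} (hk : 1 ≤ k) (v : Fin (k+1) ⊕ Fin (k+1)) :
    domDepth (Gk k) v = rnk v := by
  have hub : ∀ n ∈ {n | ∃ l : List (Fin (k+1) ⊕ Fin (k+1)),
      IsDomChain (Gk k) l ∧ l.head? = some v ∧ l.length = n + 1}, n ≤ rnk v := by
    rintro n ⟨l, hd, hh, hlen⟩
    have := chain_len rnk l (domchain_rank hk hd) v hh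
    omega
  have hmem : rnk v ∈ {n | ∃ l : List (Fin (k+1) ⊕ Fin (k+1)),
      IsDomChain (Gk k) l ∧ l.head? = some v ∧ l.length = n + 1} := by
    match v with
    | Sum.inl i =>
      obtain ⟨l, h1, h2, h3⟩ := gk_chain (G := Gk k) Sum.inl Sum.inl_injective
        (fun i j h => dom_ll.mpr h) i
      exact ⟨l, h1, h2, h3⟩
    | Sum.inr i =>
      obtain ⟨l, h1, h2, h3⟩ := gk_chain (G := Gk k) Sum.inr Sum.inr_injective
        (fun i j h => dom_rr.mpr h) i
      exact ⟨l, h1, h2, h3⟩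
  exact le_antisymm (csSup_le' hub) (le_csSup ⟨rnk v, hub⟩ hmem)

lemma mem_compl_st_inl {k : ℕ} {i : Fin (k+1)} {c : Fin (k+1) ⊕ Fin (k+1)}
    (hc : c ∈ (st (Gk k) (Sum.inl i))ᶜ) : ∃ m : Fin (k+1), c = Sum.inr m := by
  match c with
  | Sum.inr m => exact ⟨m, rfl⟩
  | Sum.inl l =>
    exfalso
    apply hc
    rw [mem_st]
    by_cases h : l = i
    · exact Or.inl (by rw [h])
    · exact Or.inr (gk_adj_ll.mpr fun e => h e.symm)

lemma mem_compl_st_inr {k : ℕ} {i : Fin (k+1)} {c : Fin (k+1) ⊕ Fin (k+1)}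
    (hc : c ∈ (st (Gk k) (Sum.inr i))ᶜ) : ∃ m : Fin (k+1), c = Sum.inl m := by
  match c with
  | Sum.inl m => exact ⟨m, rfl⟩
  | Sum.inr l =>
    exfalso
    apply hc
    rw [mem_st]
    by_cases h : l = i
    · exact Or.inl (by rw [h])
    · exact Or.inr (gk_adj_rr.mpr fun e => h e.symm)

lemma gk_st_compl_adj {k : ℕ} {v a b : Fin (k+1) ⊕ Fin (k+1)} (ha : a ∈ (st (Gk k) v)ᶜ)
    (hb : b ∈ (st (Gk k) v)ᶜ) (hab : a ≠ b) : (Gk k).Adj a b := by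
  match v with
  | Sum.inl i =>
    obtain ⟨m, rfl⟩ := mem_compl_st_inl ha
    obtain ⟨m', rfl⟩ := mem_compl_st_inl hb
    exact gk_adj_rr.mpr fun e => hab (by rw [e])
  | Sum.inr i =>
    obtain ⟨m, rfl⟩ := mem_compl_st_inr ha
    obtain ⟨m', rfl⟩ := mem_compl_st_inr hb
    exact gk_adj_ll.mpr fun e => hab (by rw [e])

lemma gk_comp_st {k : ℕ} {v : Fin (k+1) ⊕ Fin (k+1)} {Y : Set (Fin (k+1) ⊕ Fin (k+1))}
    (h : IsCompOf (Gk k) ((st (Gk k) v)ᶜ) Y) : Y = (st (Gk k) v)ᶜ := by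
  obtain ⟨⟨a, haY⟩, hsub, hcomp⟩ := h
  apply Set.Subset.antisymm hsub
  intro b hb
  have haS := hsub haY
  refine (hcomp ⟨a, haS⟩ haY ⟨b, hb⟩).mp ?_
  by_cases hab : a = b
  · subst hab
    exact SimpleGraph.Reachable.refl _
  · refine SimpleGraph.Adj.reachable ?_
    exact gk_st_compl_adj haS hb hab

lemma gk_ssDepth {k : ℕ} (v : Fin (k+1) ⊕ Fin (k+1)) : ssDepth (Gk k) v = 0 := by
  have he : {n | ∃ (l : List (Fin (k+1) ⊕ Fin (k+1))) (x1 : Fin (k+1) ⊕ Fin (k+1)),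
      IsSSPChain (Gk k) l v x1 ∧ l.length = n} = ∅ := by
    ext n
    simp only [Set.mem_setOf_eq, Set.mem_empty_iff_false, iff_false]
    rintro ⟨l, x1, ⟨_, _, _, Y1, Y2, h1, h2, hne, _, _⟩, _⟩
    exact hne ((gk_comp_st h1).trans (gk_comp_st h2).symm)
  unfold ssDepth
  rw [he]
  exact csSup_empty

lemma gk_vdepth {k : ℕ} (hk : 1 ≤ k) (v : Fin (k+1) ⊕ Fin (k+1)) :
    vdepth (Gk k) v = rnk v := by
  unfold vdepth
  rw [gk_domDepth hk v, gk_ssDepth v]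
  exact max_eq_left (Nat.zero_le _)

/-- For `k ≥ 1`, the graph `Γ_k` contains no domination-equivalent
pair, no separating intersection of links, and `depth(Γ_k) = k`; indeed
`depth(x_i) = depth(y_i) = i` for each `i`. -/
theorem gk_no_domEquiv_no_sil_depth (k : ℕ) (hk : 1 ≤ k) :
    ¬ DomEquivPair (Gk k) ∧ ¬ SepIntLinks (Gk k) ∧ gdepth (Gk k) = k ∧
      ∀ i : Fin (k + 1),
        vdepth (Gk k) (Sum.inl i) = (i : ℕ) ∧ vdepth (Gk k) (Sum.inr i) = (i : ℕ) := by
  refine ⟨?_, ?_, ?_, ?_⟩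
  · rintro ⟨x, y, hne, h1, h2⟩
    match x, y with
    | Sum.inl i, Sum.inl j =>
      have a1 := dom_ll.mp h1
      have a2 := dom_ll.mp h2
      exact hne (congrArg Sum.inl (Fin.ext (le_antisymm a2 a1)))
    | Sum.inl i, Sum.inr j =>
      obtain ⟨hj0, hik⟩ := (dom_lr hk).mp h1
      obtain ⟨hi0, hjk⟩ := (dom_rl hk).mp h2
      omega
    | Sum.inr i, Sum.inl j =>
      obtain ⟨hj0, hik⟩ := (dom_rl hk).mp h1
      obtain ⟨hi0, hjk⟩ := (dom_lr hk).mp h2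
      omega
    | Sum.inr i, Sum.inr j =>
      have a1 := dom_rr.mp h1
      have a2 := dom_rr.mp h2
      exact hne (congrArg Sum.inr (Fin.ext (le_antisymm a2 a1)))
  · rintro ⟨x, y, hne, hnadj, z, ⟨hz1, hx1, hr1⟩, ⟨hz2, hy2, hr2⟩⟩
    match x, y with
    | Sum.inl i, Sum.inl j =>
      exact hnadj (gk_adj_ll.mpr fun e => hne (by rw [e]))
    | Sum.inr i, Sum.inr j =>
      exact hnadj (gk_adj_rr.mpr fun e => hne (by rw [e]))
    | Sum.inl i, Sum.inr j =>
      cases z with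
      | inl l =>
        apply hr1
        by_cases h : l = i
        · subst h
          exact SimpleGraph.Reachable.refl _
        · refine SimpleGraph.Adj.reachable ?_
          exact gk_adj_ll.mpr h
      | inr m =>
        apply hr2
        by_cases h : m = j
        · subst h
          exact SimpleGraph.Reachable.refl _
        · refine SimpleGraph.Adj.reachable ?_
          exact gk_adj_rr.mpr h
    | Sum.inr i, Sum.inl j =>
      cases z with
      | inl l =>
        apply hr2
        by_cases h : l = j
        · subst h
          exact SimpleGraph.Reachable.refl _
        · refine SimpleGraph.Adj.reachable ?_
          exact gk_adj_ll.mpr h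
      | inr m =>
        apply hr1
        by_cases h : m = i
        · subst h
          exact SimpleGraph.Reachable.refl _
        · refine SimpleGraph.Adj.reachable ?_
          exact gk_adj_rr.mpr h
  · have hub : ∀ n ∈ {n | ∃ x : Fin (k+1) ⊕ Fin (k+1), n = vdepth (Gk k) x}, n ≤ k := by
      rintro n ⟨x, rfl⟩
      rw [gk_vdepth hk x]
      match x with
      | Sum.inl i => exact Fin.is_le i
      | Sum.inr i => exact Fin.is_le i
    have hmem : k ∈ {n | ∃ x : Fin (k+1) ⊕ Fin (k+1), n = vdepth (Gk k) x} := by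
      refine ⟨Sum.inl ⟨k, Nat.lt_succ_self k⟩, ?_⟩
      rw [gk_vdepth hk]
      rfl
    exact le_antisymm (csSup_le' hub) (le_csSup ⟨k, hub⟩ hmem)
  · intro i
    exact ⟨by rw [gk_vdepth hk]; rfl, by rw [gk_vdepth hk]; rfl⟩
end
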